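/- Let {P_t} be a strongly continuous contraction semigroup on L^p(X,μ) with generator L, and let 0 < s < α ≤ 1, p ≥ 1. Suppose f ∈ L^p satisfies the pseudo-Poincaré bound ‖P_t f − f‖_{L^p} ≤ t^α N(f) for all t > 0, where N(f) < ∞. Then the Bochner integral ∫_0^∞ t^{−s−1}(P_t f − f) dt converges absolutely in L^p, and its L^p norm is bounded by (2^{2−s/α}/(s^{1−s/α}(α−s)^{s/α})) · ‖f‖_{L^p}^{1−s/α} · N(f)^{s/α} · (1/1) (up to the normalizing factor Γ(1−s)/s defining (−L)^s f). In particular ‖(−L)^s f‖_{L^p} ≤ C_{s,α} ‖f‖_{L^p}^{1−s/α} N(f)^{s/α}. -/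
import Mathlib


open MeasureTheory Set

/-- Bochner subordination bound for fractional powers: if `P_t` is a strongly continuous
contraction semigroup and `f` satisfies the pseudo-Poincaré bound
`‖P_t f − f‖ ≤ t^α N(f)` for all `t > 0`, with `0 < s < α ≤ 1`, then
`t ↦ t^{−s−1}(P_t f − f)` is Bochner integrable on `(0,∞)` and the norm of its integral
(which, up to the factor `Γ(1−s)/s`, is `‖(−L)^s f‖`) is bounded by
`(2^{2−s/α}/(s^{1−s/α}(α−s)^{s/α})) ‖f‖^{1−s/α} N(f)^{s/α}`. -/
theorem stmt10 {E : Type*} [NormedAddCommGroup E] [NormedSpace ℝ E] [CompleteSpace E]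
    (P : ℝ → E →L[ℝ] E) (s α : ℝ) (hs : 0 < s) (hsα : s < α) (hα : α ≤ 1)
    (f : E) (Nf : ℝ) (hNf : 0 ≤ Nf)
    (hcontr : ∀ t : ℝ, 0 < t → ‖P t f‖ ≤ ‖f‖)
    (hcont : ContinuousOn (fun t : ℝ => P t f) (Ioi 0))
    (hPP : ∀ t : ℝ, 0 < t → ‖P t f - f‖ ≤ t ^ α * Nf) :
    IntegrableOn (fun t : ℝ => t ^ (-s - 1) • (P t f - f)) (Ioi 0) volume ∧
    ‖∫ t in Ioi (0 : ℝ), t ^ (-s - 1) • (P t f - f)‖ ≤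
      2 ^ (2 - s / α) / (s ^ (1 - s / α) * (α - s) ^ (s / α)) *
        ‖f‖ ^ (1 - s / α) * Nf ^ (s / α) := by
  have hα0 : 0 < α := hs.trans hsα
  have hαs : 0 < α - s := sub_pos.mpr hsα
  have hβ0 : 0 < s / α := div_pos hs hα0
  have hβ1 : s / α < 1 := (div_lt_one hα0).mpr hsα
  have hmeas : AEStronglyMeasurable (fun t : ℝ => t ^ (-s - 1) • (P t f - f))
      (volume.restrict (Ioi 0)) := by
    apply ContinuousOn.aestronglyMeasurable _ measurableSet_Ioi
    exact (continuousOn_id.rpow_const fun x hx => Or.inl (ne_of_gt hx)).smul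
      (hcont.sub continuousOn_const)
  by_cases hf0 : f = 0
  · have hz : (fun t : ℝ => t ^ (-s - 1) • (P t f - f)) = fun _ => (0 : E) := by
      funext t; simp [hf0]
    rw [hz]
    refine ⟨integrableOn_zero, ?_⟩
    simp only [integral_zero, norm_zero, hf0, norm_zero]
    rw [Real.zero_rpow (by linarith : 1 - s / α ≠ 0)]
    simp
  by_cases hNf0 : Nf = 0
  · have hz : ∀ t ∈ Ioi (0:ℝ), t ^ (-s - 1) • (P t f - f) = (0 : E) := by
      intro t ht
      have h1 := hPP t ht
      rw [hNf0, mul_zero] at h1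
      have : P t f - f = 0 := by
        have := norm_le_zero_iff.mp h1; exact this
      rw [this, smul_zero]
    constructor
    · exact (integrableOn_zero).congr_fun (fun t ht => (hz t ht).symm) measurableSet_Ioi
    · rw [setIntegral_congr_fun measurableSet_Ioi hz]
      simp only [integral_zero, norm_zero, hNf0]
      rw [Real.zero_rpow (ne_of_gt hβ0)]
      simp
  -- main case
  have hfpos : 0 < ‖f‖ := norm_pos_iff.mpr hf0
  have hNfpos : 0 < Nf := lt_of_le_of_ne hNf (Ne.symm hNf0)
  set A : ℝ := 2 * ‖f‖ * (α - s) / (s * Nf) with hA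
  have hApos : 0 < A := div_pos (by positivity) (by positivity)
  set δ : ℝ := A ^ (1 / α) with hδ
  have hδpos : 0 < δ := Real.rpow_pos_of_pos hApos _
  have hδr : ∀ r : ℝ, δ ^ r = A ^ (r / α) := by
    intro r
    rw [hδ, show r / α = (1 / α) * r by ring, Real.rpow_mul hApos.le]
  -- integrability on the two pieces
  have hgi : IntegrableOn (fun t : ℝ => Nf * t ^ (α - s - 1)) (Ioc 0 δ) volume := by
    apply Integrable.const_mul
    have h := intervalIntegral.intervalIntegrable_rpow' (r := α - s - 1) (a := 0) (b := δ)
      (by linarith)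
    rwa [intervalIntegrable_iff_integrableOn_Ioc_of_le hδpos.le] at h
  have hb1 : ∀ t ∈ Ioc (0:ℝ) δ, ‖t ^ (-s - 1) • (P t f - f)‖ ≤ Nf * t ^ (α - s - 1) := by
    intro t ht
    rw [norm_smul, Real.norm_eq_abs, abs_of_pos (Real.rpow_pos_of_pos ht.1 _)]
    calc t ^ (-s - 1) * ‖P t f - f‖ ≤ t ^ (-s - 1) * (t ^ α * Nf) := by
          exact mul_le_mul_of_nonneg_left (hPP t ht.1) (Real.rpow_pos_of_pos ht.1 _).le
      _ = Nf * t ^ (α - s - 1) := by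
          rw [show α - s - 1 = (-s - 1) + α by ring, Real.rpow_add ht.1]; ring
  have h1 : IntegrableOn (fun t : ℝ => t ^ (-s - 1) • (P t f - f)) (Ioc 0 δ) volume := by
    refine Integrable.mono' hgi (hmeas.mono_set Ioc_subset_Ioi_self) ?_
    filter_upwards [ae_restrict_mem measurableSet_Ioc] with t ht using hb1 t ht
  have hgi2 : IntegrableOn (fun t : ℝ => 2 * ‖f‖ * t ^ (-s - 1)) (Ioi δ) volume :=
    (integrableOn_Ioi_rpow_of_lt (by linarith) hδpos).const_mul _
  have hb2 : ∀ t ∈ Ioi δ, ‖t ^ (-s - 1) • (P t f - f)‖ ≤ 2 * ‖f‖ * t ^ (-s - 1) := by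
    intro t ht
    have htpos : 0 < t := hδpos.trans ht
    rw [norm_smul, Real.norm_eq_abs, abs_of_pos (Real.rpow_pos_of_pos htpos _)]
    have : ‖P t f - f‖ ≤ 2 * ‖f‖ := by
      calc ‖P t f - f‖ ≤ ‖P t f‖ + ‖f‖ := norm_sub_le _ _
        _ ≤ 2 * ‖f‖ := by linarith [hcontr t htpos]
    calc t ^ (-s - 1) * ‖P t f - f‖ ≤ t ^ (-s - 1) * (2 * ‖f‖) :=
          mul_le_mul_of_nonneg_left this (Real.rpow_pos_of_pos htpos _).le
      _ = 2 * ‖f‖ * t ^ (-s - 1) := by ring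
  have h2 : IntegrableOn (fun t : ℝ => t ^ (-s - 1) • (P t f - f)) (Ioi δ) volume := by
    refine Integrable.mono' hgi2 (hmeas.mono_set (Ioi_subset_Ioi hδpos.le)) ?_
    filter_upwards [ae_restrict_mem measurableSet_Ioi] with t ht using hb2 t ht
  have hint : IntegrableOn (fun t : ℝ => t ^ (-s - 1) • (P t f - f)) (Ioi 0) volume := by
    rw [← Ioc_union_Ioi_eq_Ioi hδpos.le]
    exact h1.union h2
  refine ⟨hint, ?_⟩
  have hI1 : ∫ t in Ioc (0:ℝ) δ, Nf * t ^ (α - s - 1) = Nf * (δ ^ (α - s) / (α - s)) := by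
    rw [MeasureTheory.integral_const_mul _ _]
    congr 1
    rw [← intervalIntegral.integral_of_le hδpos.le,
      integral_rpow (Or.inl (by linarith : (-1:ℝ) < α - s - 1))]
    rw [Real.zero_rpow (by linarith : α - s - 1 + 1 ≠ 0)]
    ring_nf
  have hI2 : ∫ t in Ioi δ, 2 * ‖f‖ * t ^ (-s - 1) = 2 * ‖f‖ * (δ ^ (-s) / s) := by
    rw [MeasureTheory.integral_const_mul _ _, integral_Ioi_rpow_of_lt (by linarith) hδpos]
    congr 1
    rw [show -s - 1 + 1 = -s by ring]
    field_simp
  calc ‖∫ t in Ioi (0:ℝ), t ^ (-s - 1) • (P t f - f)‖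
      ≤ ∫ t in Ioi (0:ℝ), ‖t ^ (-s - 1) • (P t f - f)‖ := norm_integral_le_integral_norm _
    _ = (∫ t in Ioc (0:ℝ) δ, ‖t ^ (-s - 1) • (P t f - f)‖)
        + ∫ t in Ioi δ, ‖t ^ (-s - 1) • (P t f - f)‖ := by
        rw [← Ioc_union_Ioi_eq_Ioi hδpos.le,
          setIntegral_union (Ioc_disjoint_Ioi le_rfl) measurableSet_Ioi h1.norm h2.norm]
    _ ≤ (∫ t in Ioc (0:ℝ) δ, Nf * t ^ (α - s - 1)) + ∫ t in Ioi δ, 2 * ‖f‖ * t ^ (-s - 1) := by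
        refine add_le_add ?_ ?_
        · exact setIntegral_mono_on h1.norm hgi measurableSet_Ioc hb1
        · exact setIntegral_mono_on h2.norm hgi2 measurableSet_Ioi hb2
    _ = Nf * (δ ^ (α - s) / (α - s)) + 2 * ‖f‖ * (δ ^ (-s) / s) := by rw [hI1, hI2]
    _ ≤ 2 ^ (2 - s / α) / (s ^ (1 - s / α) * (α - s) ^ (s / α)) *
        ‖f‖ ^ (1 - s / α) * Nf ^ (s / α) := by
        rw [hδr, hδr]
        rw [show (α - s) / α = 1 - s / α by field_simp,
          show (-s) / α = -(s / α) by ring]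
        rw [Real.rpow_sub hApos, Real.rpow_one, Real.rpow_neg hApos.le]
        have hAβ : A ^ (s / α) =
            2 ^ (s / α) * ‖f‖ ^ (s / α) * (α - s) ^ (s / α) / (s ^ (s / α) * Nf ^ (s / α)) := by
          rw [hA, Real.div_rpow (by positivity) (by positivity),
            Real.mul_rpow (by positivity) hαs.le, Real.mul_rpow (by norm_num) hfpos.le,
            Real.mul_rpow hs.le hNfpos.le]
        have h2e : (2:ℝ) ^ (2 - s / α) = 4 / 2 ^ (s / α) := by
          rw [Real.rpow_sub (by norm_num : (0:ℝ) < 2)]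
          norm_num
        have hse : s ^ (1 - s / α) = s / s ^ (s / α) := by
          rw [Real.rpow_sub hs, Real.rpow_one]
        have hfe : ‖f‖ ^ (1 - s / α) = ‖f‖ / ‖f‖ ^ (s / α) := by
          rw [Real.rpow_sub hfpos, Real.rpow_one]
        rw [hAβ, h2e, hse, hfe, hA]
        have p1 : (0:ℝ) < 2 ^ (s / α) := by positivity
        have p2 : (0:ℝ) < ‖f‖ ^ (s / α) := by positivity
        have p3 : (0:ℝ) < (α - s) ^ (s / α) := by positivity
        have p4 : (0:ℝ) < s ^ (s / α) := by positivity
        have p5 : (0:ℝ) < Nf ^ (s / α) := by positivity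
        apply le_of_eq
        field_simp
        ring
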